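/- On the H-type Lie algebra n = (O × O) ⊕ O of dimension 24 (pair (16,8)), every skew-symmetric map F of type II satisfying condition (C2) is zero. -/

import Mathlib

open RealInnerProductSpace

/-- On the H-type Lie algebra `n = (𝕆 × 𝕆) ⊕ 𝕆` of dimension 24
(pair (16,8)), every skew-symmetric map of type II satisfying condition (C2) is
zero.  `𝕆` is axiomatized as an 8-dimensional normed real division algebra
(by Hurwitz's theorem, the octonions); the bracket on `v = 𝕆 × 𝕆` is
`[(U,V),(Ũ,Ṽ)] = U·Ṽ − Ũ·V ∈ z = 𝕆`; a type II map is encoded by its two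
components `f : v → z` and `g : z → v`, tied together by skew-symmetry with
respect to the product inner product on `v`. -/
theorem stmt_18 {A : Type*} [NormedAddCommGroup A] [InnerProductSpace ℝ A]
    [FiniteDimensional ℝ A] (hdim : Module.finrank ℝ A = 8)
    (mul : A →ₗ[ℝ] A →ₗ[ℝ] A) (one : A)
    (honel : ∀ a, mul one a = a) (honer : ∀ a, mul a one = a)
    (hnorm : ∀ a b, ‖mul a b‖ = ‖a‖ * ‖b‖)
    (br : A × A → A × A → A)
    (hbr : ∀ p q : A × A, br p q = mul p.1 q.2 - mul q.1 p.2)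
    (f : A × A →ₗ[ℝ] A) (g : A →ₗ[ℝ] A × A)
    (hskew : ∀ p : A × A, ∀ zz : A,
      ⟪f p, zz⟫ = - (⟪p.1, (g zz).1⟫ + ⟪p.2, (g zz).2⟫))
    (hC2 : ∀ p q r : A × A,
      ⟪f p, br q r⟫ + ⟪f q, br r p⟫ + ⟪f r, br p q⟫ = 0) :
    f = 0 ∧ g = 0 := by
  -- `one ≠ 0`
  have hone : one ≠ 0 := by
    intro h
    have hz : ∀ a : A, a = 0 := by
      intro a
      rw [← honel a, h]
      simp
    have : Subsingleton A := ⟨fun a b => by rw [hz a, hz b]⟩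
    rw [Module.finrank_zero_of_subsingleton] at hdim
    exact absurd hdim (by norm_num)
  -- left and right multiplications are conformal (polarized norm identity)
  have mulL : ∀ a x y : A, ⟪mul a x, mul a y⟫ = ‖a‖ * ‖a‖ * ⟪x, y⟫ := by
    intro a x y
    rw [real_inner_eq_norm_add_mul_self_sub_norm_mul_self_sub_norm_mul_self_div_two,
      real_inner_eq_norm_add_mul_self_sub_norm_mul_self_sub_norm_mul_self_div_two x y,
      ← map_add, hnorm, hnorm, hnorm]
    ring
  have mulR : ∀ a x y : A, ⟪mul x a, mul y a⟫ = ‖a‖ * ‖a‖ * ⟪x, y⟫ := by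
    intro a x y
    have hadd : mul (x + y) a = mul x a + mul y a := by rw [map_add]; rfl
    rw [real_inner_eq_norm_add_mul_self_sub_norm_mul_self_sub_norm_mul_self_div_two,
      real_inner_eq_norm_add_mul_self_sub_norm_mul_self_sub_norm_mul_self_div_two x y,
      ← hadd, hnorm, hnorm, hnorm]
    ring
  -- exchange identities
  have exchL : ∀ a b x y : A,
      ⟪mul a x, mul b y⟫ + ⟪mul b x, mul a y⟫ = 2 * ⟪a, b⟫ * ⟪x, y⟫ := by
    intro a b x y
    have h1 := mulL (a + b) x y
    have h2 : mul (a + b) x = mul a x + mul b x := by rw [map_add]; rfl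
    have h3 : mul (a + b) y = mul a y + mul b y := by rw [map_add]; rfl
    have h4 : ‖a + b‖ * ‖a + b‖ = ‖a‖ * ‖a‖ + 2 * ⟪a, b⟫ + ‖b‖ * ‖b‖ :=
      norm_add_mul_self_real a b
    rw [h2, h3, inner_add_left, inner_add_right, inner_add_right, h4] at h1
    have h5 := mulL a x y
    have h6 := mulL b x y
    nlinarith [h1, h5, h6]
  have exchR : ∀ a b x y : A,
      ⟪mul x a, mul y b⟫ + ⟪mul x b, mul y a⟫ = 2 * ⟪a, b⟫ * ⟪x, y⟫ := by
    intro a b x y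
    have h1 := mulR (a + b) x y
    have h2 : mul x (a + b) = mul x a + mul x b := by rw [map_add]
    have h3 : mul y (a + b) = mul y a + mul y b := by rw [map_add]
    have h4 : ‖a + b‖ * ‖a + b‖ = ‖a‖ * ‖a‖ + 2 * ⟪a, b⟫ + ‖b‖ * ‖b‖ :=
      norm_add_mul_self_real a b
    rw [h2, h3, inner_add_left, inner_add_right, inner_add_right, h4] at h1
    have h5 := mulR a x y
    have h6 := mulR b x y
    nlinarith [h1, h5, h6]
  -- multiplication by an imaginary element is skew-adjoint
  have L1 : ∀ e : A, ⟪e, one⟫ = 0 → ∀ x y : A, ⟪mul e x, y⟫ = -⟪x, mul e y⟫ := by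
    intro e he x y
    have h := exchL e one x y
    rw [honel, honel, he] at h
    linarith
  have R1 : ∀ e : A, ⟪e, one⟫ = 0 → ∀ x y : A, ⟪mul x e, y⟫ = -⟪x, mul y e⟫ := by
    intro e he x y
    have h := exchR e one x y
    rw [honer, honer, he] at h
    linarith
  -- two orthonormal imaginary elements
  obtain ⟨e₁, e₂, he₁, he₂, he₁₂, he₁o, he₂o⟩ :
      ∃ e₁ e₂ : A, ‖e₁‖ = 1 ∧ ‖e₂‖ = 1 ∧ ⟪e₁, e₂⟫ = 0 ∧ ⟪e₁, one⟫ = 0 ∧ ⟪e₂, one⟫ = 0 := by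
    have hrk : Module.finrank ℝ ↥((ℝ ∙ one)ᗮ) = 7 := by
      have h2 := Submodule.finrank_add_finrank_orthogonal (K := (ℝ ∙ one)) (E := A)
      rw [finrank_span_singleton hone, hdim] at h2
      omega
    have b := stdOrthonormalBasis ℝ ↥((ℝ ∙ one)ᗮ)
    rw [hrk] at b
    have mem : ∀ i : Fin 7, ⟪(b i : A), one⟫ = 0 := by
      intro i
      rw [real_inner_comm]
      exact (Submodule.mem_orthogonal _ _).1 (b i).2 one (Submodule.mem_span_singleton_self one)
    refine ⟨(b 0 : ↥((ℝ ∙ one)ᗮ)), (b 1 : ↥((ℝ ∙ one)ᗮ)), ?_, ?_, ?_, mem 0, mem 1⟩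
    · exact b.orthonormal.1 0
    · exact b.orthonormal.1 1
    · have := b.orthonormal.2 (i := 0) (j := 1) (by decide)
      exact this
  have hL1 := L1 e₁ he₁o
  have hL2 := L1 e₂ he₂o
  have hR1 := R1 e₁ he₁o
  have hR2 := R1 e₂ he₂o
  -- extract the two basic relations from (C2)
  have hA : ∀ U W V : A, ⟪f (U, 0), mul W V⟫ = ⟪f (W, 0), mul U V⟫ := by
    intro U W V
    have h := hC2 (U, 0) (W, 0) (0, V)
    simp only [hbr, map_zero, LinearMap.zero_apply, sub_zero, zero_sub, sub_self,
      inner_zero_right, inner_neg_right] at h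
    linarith
  have hB : ∀ V W U : A, ⟪f (0, V), mul U W⟫ = ⟪f (0, W), mul U V⟫ := by
    intro V W U
    have h := hC2 (0, V) (0, W) (U, 0)
    simp only [hbr, map_zero, LinearMap.zero_apply, sub_zero, zero_sub, sub_self,
      inner_zero_right, inner_neg_right] at h
    linarith
  set c := f (one, 0) with hc
  set d := f (0, one) with hd
  have hcU : ∀ U V : A, ⟪f (U, 0), V⟫ = ⟪c, mul U V⟫ := by
    intro U V
    have h := hA U one V
    rwa [honel] at h
  have hdV : ∀ V U : A, ⟪f (0, V), U⟫ = ⟪d, mul U V⟫ := by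
    intro V U
    have h := hB V one U
    rwa [honer] at h
  have hH : ∀ x y z : A, ⟪c, mul x (mul y z)⟫ = ⟪c, mul y (mul x z)⟫ := by
    intro x y z
    have h := hA x y z
    rwa [hcU x (mul y z), hcU y (mul x z)] at h
  have hH' : ∀ x y u : A, ⟪d, mul (mul u y) x⟫ = ⟪d, mul (mul u x) y⟫ := by
    intro x y u
    have h := hB x y u
    rwa [hdV x (mul u y), hdV y (mul u x)] at h
  -- kill c
  have hc0 : c = 0 := by
    have hsw : mul e₁ (mul e₂ c) = mul e₂ (mul e₁ c) := by
      have key : ∀ z : A, ⟪mul e₁ (mul e₂ c) - mul e₂ (mul e₁ c), z⟫ = 0 := by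
        intro z
        have t1 : ⟪mul e₁ (mul e₂ c), z⟫ = ⟪c, mul e₂ (mul e₁ z)⟫ := by
          rw [hL1 (mul e₂ c) z, hL2 c (mul e₁ z)]; ring
        have t2 : ⟪mul e₂ (mul e₁ c), z⟫ = ⟪c, mul e₁ (mul e₂ z)⟫ := by
          rw [hL2 (mul e₁ c) z, hL1 c (mul e₂ z)]; ring
        rw [inner_sub_left, t1, t2, hH e₂ e₁ z]
        ring
      have h := key (mul e₁ (mul e₂ c) - mul e₂ (mul e₁ c))
      rwa [inner_self_eq_zero, sub_eq_zero] at h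
    have hn : ‖mul e₁ (mul e₂ c)‖ = ‖c‖ := by
      rw [hnorm, hnorm, he₁, he₂]; ring
    have key1 : ⟪mul e₁ (mul e₂ c), mul e₂ (mul e₁ c)⟫ = ‖c‖ * ‖c‖ := by
      rw [← hsw, real_inner_self_eq_norm_mul_norm, hn]
    have h5 : ⟪c, mul e₁ (mul e₁ c)⟫ = -(‖c‖ * ‖c‖) := by
      have h := hL1 c (mul e₁ c)
      rw [real_inner_self_eq_norm_mul_norm, hnorm, he₁, one_mul] at h
      linarith
    have key2 : ⟪mul e₂ (mul e₂ c), mul e₁ (mul e₁ c)⟫ = ‖c‖ * ‖c‖ := by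
      have h6 := hL2 (mul e₂ c) (mul e₁ (mul e₁ c))
      have h7 := mulL e₂ c (mul e₁ (mul e₁ c))
      rw [he₂] at h7
      linarith
    have hexch := exchL e₁ e₂ (mul e₂ c) (mul e₁ c)
    rw [he₁₂] at hexch
    have hcc : ‖c‖ * ‖c‖ = 0 := by linarith
    have : ‖c‖ = 0 := mul_self_eq_zero.1 hcc
    exact norm_eq_zero.1 this
  -- kill d
  have hd0 : d = 0 := by
    have hsw : mul (mul d e₂) e₁ = mul (mul d e₁) e₂ := by
      have key : ∀ u : A, ⟪mul (mul d e₂) e₁ - mul (mul d e₁) e₂, u⟫ = 0 := by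
        intro u
        have t1 : ⟪mul (mul d e₂) e₁, u⟫ = ⟪d, mul (mul u e₁) e₂⟫ := by
          rw [hR1 (mul d e₂) u, hR2 d (mul u e₁)]; ring
        have t2 : ⟪mul (mul d e₁) e₂, u⟫ = ⟪d, mul (mul u e₂) e₁⟫ := by
          rw [hR2 (mul d e₁) u, hR1 d (mul u e₂)]; ring
        rw [inner_sub_left, t1, t2, hH' e₂ e₁ u]
        ring
      have h := key (mul (mul d e₂) e₁ - mul (mul d e₁) e₂)
      rwa [inner_self_eq_zero, sub_eq_zero] at h
    have hn : ‖mul (mul d e₂) e₁‖ = ‖d‖ := by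
      rw [hnorm, hnorm, he₁, he₂]; ring
    have key1 : ⟪mul (mul d e₂) e₁, mul (mul d e₁) e₂⟫ = ‖d‖ * ‖d‖ := by
      rw [← hsw, real_inner_self_eq_norm_mul_norm, hn]
    have h5 : ⟪d, mul (mul d e₁) e₁⟫ = -(‖d‖ * ‖d‖) := by
      have h := hR1 d (mul d e₁)
      rw [real_inner_self_eq_norm_mul_norm, hnorm, he₁, mul_one] at h
      linarith
    have key2 : ⟪mul (mul d e₂) e₂, mul (mul d e₁) e₁⟫ = ‖d‖ * ‖d‖ := by
      have h6 := hR2 (mul d e₂) (mul (mul d e₁) e₁)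
      have h7 := mulR e₂ d (mul (mul d e₁) e₁)
      rw [he₂] at h7
      linarith
    have hexch := exchR e₁ e₂ (mul d e₂) (mul d e₁)
    rw [he₁₂] at hexch
    have hdd : ‖d‖ * ‖d‖ = 0 := by linarith
    exact norm_eq_zero.1 (mul_self_eq_zero.1 hdd)
  -- f vanishes
  have hf1 : ∀ U : A, f (U, 0) = 0 := by
    intro U
    have h := hcU U (f (U, 0))
    rw [hc0, inner_zero_left] at h
    exact inner_self_eq_zero.1 h
  have hf2 : ∀ V : A, f (0, V) = 0 := by
    intro V
    have h := hdV V (f (0, V))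
    rw [hd0, inner_zero_left] at h
    exact inner_self_eq_zero.1 h
  have hf0 : ∀ p : A × A, f p = 0 := by
    intro p
    have h : f (p.1, p.2) = f (p.1, 0) + f (0, p.2) := by
      rw [← map_add]
      congr 1
      simp
    rw [hf1, hf2, add_zero] at h
    exact h
  refine ⟨LinearMap.ext fun p => by simp [hf0 p], LinearMap.ext fun z => ?_⟩
  have h := hskew (g z) z
  rw [hf0 (g z), inner_zero_left] at h
  have h1 : ⟪(g z).1, (g z).1⟫ = 0 := by
    have n1 := real_inner_self_nonneg (x := (g z).1)
    have n2 := real_inner_self_nonneg (x := (g z).2)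
    linarith
  have h2 : ⟪(g z).2, (g z).2⟫ = 0 := by
    have n1 := real_inner_self_nonneg (x := (g z).1)
    have n2 := real_inner_self_nonneg (x := (g z).2)
    linarith
  show g z = 0
  exact Prod.ext (inner_self_eq_zero.1 h1) (inner_self_eq_zero.1 h2)
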